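/- There exists a decision instance with n = 3 voters and T = 6 rounds such that every MES-consistent decision sequence fails JR (and hence fails PJR). -/

import Mathlib

attribute [local instance] Classical.propDecidable

/-- A decision instance with `n ≥ 1` voters (indexed by `Fin n`), time horizon `T ≥ 1`
(rounds indexed by `Fin T`), alternatives drawn from a type `γ`, a finite nonempty set
`C j` of alternatives available in round `j`, and approval sets `A i j ⊆ C j`. -/
structure Inst (n T : ℕ) (γ : Type) where
  hn : 1 ≤ n
  hT : 1 ≤ T
  C : Fin T → Finset γ
  hC : ∀ j, (C j).Nonempty
  A : Fin n → Fin T → Finset γ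
  hA : ∀ i j, A i j ⊆ C j

namespace Inst

variable {n T : ℕ} {γ : Type}

/-- `d` is a decision sequence: one alternative of `C j` for each round `j`. -/
def ValidSeq (I : Inst n T γ) (d : Fin T → γ) : Prop := ∀ j, d j ∈ I.C j

/-- The utility of voter `i`: the number of rounds whose decision `i` approves. -/
noncomputable def util (I : Inst n T γ) (d : Fin T → γ) (i : Fin n) : ℕ :=
  Nat.card {j : Fin T // d j ∈ I.A i j}

/-- The group `S` agrees in round `j`: some alternative is approved by all members of `S`. -/
def agrees (I : Inst n T γ) (S : Finset (Fin n)) (j : Fin T) : Prop :=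
  ∃ c, ∀ i ∈ S, c ∈ I.A i j

/-- The number of rounds in which the group `S` agrees. -/
noncomputable def agreeCount (I : Inst n T γ) (S : Finset (Fin n)) : ℕ :=
  Nat.card {j : Fin T // I.agrees S j}

/-- The number of rounds whose decision is approved by at least one member of `S`. -/
noncomputable def happyCount (I : Inst n T γ) (d : Fin T → γ) (S : Finset (Fin n)) : ℕ :=
  Nat.card {j : Fin T // ∃ i ∈ S, d j ∈ I.A i j}

/-- With price `p = n/T`, an alternative `c` is `ρ`-affordable in round `j` with respect
to budgets `b` if its approvers can pay `p`, with no one paying more than `ρ`: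
`Σ_{i : c ∈ A^i_j} min(b(i), ρ) ≥ p`. -/
def affordable (I : Inst n T γ) (b : Fin n → ℝ) (j : Fin T) (c : γ) (ρ : ℝ) : Prop :=
  (n : ℝ) / T ≤ ∑ i ∈ Finset.univ.filter (fun i => c ∈ I.A i j), min (b i) ρ

/-- An execution of the Method of Equal Shares deciding the first `t ≤ T` rounds:
budgets start at `1`; in each decided round `j < t` the decision `d j ∈ C j` is
`ρ`-affordable for the least `ρ ≥ 0` at which some available alternative is affordable,
approvers pay (their budget is decreased by `ρ`, floored at `0`) and other budgets are
unchanged; and if `t < T` then no alternative of round `t` is `ρ`-affordable for any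
`ρ ≥ 0` (MES terminates prematurely). -/
def MESExec (I : Inst n T γ) (t : ℕ) (b : ℕ → Fin n → ℝ) (d : Fin T → γ) : Prop :=
  t ≤ T ∧ (∀ i, b 0 i = 1) ∧ (∀ j i, 0 ≤ b j i) ∧
  (∀ j : Fin T, (j : ℕ) < t →
    d j ∈ I.C j ∧
    ∃ ρ : ℝ, 0 ≤ ρ ∧ I.affordable (b j) j (d j) ρ ∧
      (∀ ρ' : ℝ, 0 ≤ ρ' → (∃ c ∈ I.C j, I.affordable (b j) j c ρ') → ρ ≤ ρ') ∧
      (∀ i, d j ∈ I.A i j → b ((j : ℕ) + 1) i = max 0 (b (j : ℕ) i - ρ)) ∧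
      (∀ i, d j ∉ I.A i j → b ((j : ℕ) + 1) i = b (j : ℕ) i)) ∧
  (∀ h : t < T, ∀ c ∈ I.C ⟨t, h⟩, ∀ ρ : ℝ, 0 ≤ ρ → ¬ I.affordable (b t) ⟨t, h⟩ c ρ)

/-- A decision sequence is MES-consistent if its decisions in the rounds decided by some
MES execution coincide with those of the execution (decisions in later rounds being
arbitrary alternatives of the respective rounds). -/
def MESConsistent (I : Inst n T γ) (d : Fin T → γ) : Prop :=
  I.ValidSeq d ∧ ∃ (t : ℕ) (b : ℕ → Fin n → ℝ), I.MESExec t b d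

/-- `D` satisfies JR: for every `k ∈ {1,…,T}` and every nonempty group `S` that agrees in
at least `k` rounds with `|S| ≥ n/k`, some voter `i ∈ S` has `U^i_D ≥ 1`. -/
def JR (I : Inst n T γ) (d : Fin T → γ) : Prop :=
  ∀ k : ℕ, 1 ≤ k → k ≤ T →
    ∀ S : Finset (Fin n), S.Nonempty → k ≤ I.agreeCount S →
      (n : ℝ) / k ≤ S.card → ∃ i ∈ S, 1 ≤ I.util d i

end Inst

noncomputable section MESCounterexample

/-- Rounds 0,1,2 offer alternatives `{0,1}`; rounds 3,4,5 offer only `{0}`. -/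
def myC : Fin 6 → Finset (Fin 2) := fun j => if (j : ℕ) < 3 then {0, 1} else {0}

/-- Voters 0 and 1 always approve `0`; voter 2 approves `1` in rounds 0,1,2 and
nothing afterwards. -/
def myA : Fin 3 → Fin 6 → Finset (Fin 2) := fun i j =>
  if (i : ℕ) < 2 then {0} else if (j : ℕ) < 3 then {1} else ∅

def myI : Inst 3 6 (Fin 2) where
  hn := by norm_num
  hT := by norm_num
  C := myC
  hC := by intro j; unfold myC; split <;> exact ⟨0, by simp⟩
  A := myA
  hA := by
    intro i j
    unfold myA myC
    split_ifs <;> simp [Finset.insert_subset_iff]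

lemma myIA : myI.A = myA := rfl
lemma myIC : myI.C = myC := rfl

lemma mem0 (i : Fin 3) (j : Fin 6) : (0 : Fin 2) ∈ myA i j ↔ (i = 0 ∨ i = 1) := by
  unfold myA
  by_cases h : (i : ℕ) < 2
  · rw [if_pos h]
    constructor
    · intro _
      have : (i : ℕ) = 0 ∨ (i : ℕ) = 1 := by omega
      rcases this with h' | h'
      · exact Or.inl (Fin.ext h')
      · exact Or.inr (Fin.ext h')
    · intro _; exact Finset.mem_singleton_self 0
  · rw [if_neg h]
    constructor
    · intro hm
      exfalso
      split at hm
      · exact absurd (Finset.mem_singleton.mp hm) (by decide)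
      · exact absurd hm (Finset.notMem_empty _)
    · rintro (rfl | rfl) <;> exact absurd (by decide) h

lemma filter0 (j : Fin 6) [DecidablePred fun i : Fin 3 => (0 : Fin 2) ∈ myI.A i j] :
    (Finset.univ.filter fun i => (0 : Fin 2) ∈ myI.A i j) = ({0, 1} : Finset (Fin 3)) := by
  ext i
  simp only [Finset.mem_filter, Finset.mem_univ, true_and, Finset.mem_insert,
    Finset.mem_singleton]
  exact mem0 i j

lemma filter1 (j : Fin 6) [DecidablePred fun i : Fin 3 => (1 : Fin 2) ∈ myI.A i j] :
    (Finset.univ.filter fun i => (1 : Fin 2) ∈ myI.A i j) ⊆ ({2} : Finset (Fin 3)) := by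
  intro i hi
  rw [Finset.mem_filter, myIA] at hi
  rw [Finset.mem_singleton]
  unfold myA at hi
  by_contra hne
  have h2 : (i : ℕ) < 2 := by
    have : (i : ℕ) < 3 := i.isLt
    have : (i : ℕ) ≠ 2 := fun h => hne (Fin.ext h)
    omega
  rw [if_pos h2] at hi
  exact absurd (Finset.mem_singleton.mp hi.2) (by decide)

lemma aff0_iff (bb : Fin 3 → ℝ) (j : Fin 6) (ρ : ℝ) :
    myI.affordable bb j 0 ρ ↔ (1 : ℝ) / 2 ≤ min (bb 0) ρ + min (bb 1) ρ := by
  unfold Inst.affordable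
  rw [filter0, Finset.sum_pair (by decide : (0 : Fin 3) ≠ 1)]
  norm_num

lemma aff1_bound (bb : Fin 3 → ℝ) (j : Fin 6) (ρ : ℝ) (hρ : 0 ≤ ρ)
    (hnn : ∀ i, 0 ≤ bb i) (h : myI.affordable bb j 1 ρ) : (1 : ℝ) / 2 ≤ ρ := by
  unfold Inst.affordable at h
  have key : ∀ inst : DecidablePred fun i : Fin 3 => (1 : Fin 2) ∈ myI.A i j,
      ∑ i ∈ @Finset.filter _ _ inst Finset.univ, min (bb i) ρ ≤ ρ := by
    intro inst
    calc ∑ i ∈ @Finset.filter _ _ inst Finset.univ, min (bb i) ρ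
        ≤ ∑ i ∈ ({2} : Finset (Fin 3)), min (bb i) ρ := by
          apply Finset.sum_le_sum_of_subset_of_nonneg (filter1 j)
          intro i _ _
          exact le_min (hnn i) hρ
      _ = min (bb 2) ρ := Finset.sum_singleton _ _
      _ ≤ ρ := min_le_right _ _
  have h2 := le_trans h (key _)
  have h36 : ((3 : ℕ) : ℝ) / ((6 : ℕ) : ℝ) = 1 / 2 := by norm_num
  rw [h36] at h2
  linarith

/-- One round of the forced MES execution. -/
lemma step (t : ℕ) (b : ℕ → Fin 3 → ℝ) (d : Fin 6 → Fin 2)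
    (hE : myI.MESExec t b d) (j : ℕ) (hj4 : j < 4) (hjt : j < t)
    (hb0 : b j 0 = 1 - (j : ℝ) / 4) (hb1 : b j 1 = 1 - (j : ℝ) / 4) (hb2 : b j 2 = 1) :
    d ⟨j, by omega⟩ = 0 ∧ b (j + 1) 0 = 1 - ((j : ℝ) + 1) / 4 ∧
      b (j + 1) 1 = 1 - ((j : ℝ) + 1) / 4 ∧ b (j + 1) 2 = 1 := by
  obtain ⟨ht6, hbinit, hbnn, hround, hterm⟩ := hE
  obtain ⟨hdC, ρ, hρ0, haff, hmin, hupdA, hupdN⟩ := hround ⟨j, by omega⟩ hjt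
  have hj3 : (j : ℝ) ≤ 3 := by exact_mod_cast Nat.lt_succ_iff.mp hj4
  have hmin14 : min (1 - (j : ℝ) / 4) ((1 : ℝ) / 4) = 1 / 4 := min_eq_right (by linarith)
  have h0C : (0 : Fin 2) ∈ myI.C ⟨j, by omega⟩ := by
    rw [myIC]; unfold myC; split
    · exact Finset.mem_insert_self 0 _
    · exact Finset.mem_singleton_self 0
  have haff14 : myI.affordable (b j) ⟨j, by omega⟩ 0 (1 / 4) := by
    rw [aff0_iff, hb0, hb1, hmin14]; norm_num
  have hρle : ρ ≤ 1 / 4 := hmin (1 / 4) (by norm_num) ⟨0, h0C, haff14⟩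
  have hd : d ⟨j, by omega⟩ = 0 := by
    by_contra hne
    have h1 : d ⟨j, by omega⟩ = 1 := by
      have hlt := (d ⟨j, by omega⟩).isLt
      have hv0 : (d ⟨j, by omega⟩ : ℕ) ≠ 0 := fun h => hne (Fin.ext h)
      exact Fin.ext (by omega)
    rw [h1] at haff
    have := aff1_bound (b j) ⟨j, by omega⟩ ρ hρ0 (fun i => hbnn j i) haff
    linarith
  rw [hd] at haff
  rw [aff0_iff, hb0, hb1] at haff
  have hmle : min (1 - (j : ℝ) / 4) ρ ≤ ρ := min_le_right _ _
  have hρ14 : ρ = 1 / 4 := le_antisymm hρle (by linarith)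
  have hA0 : (0 : Fin 2) ∈ myI.A 0 ⟨j, by omega⟩ := by
    rw [myIA]; exact (mem0 0 _).mpr (Or.inl rfl)
  have hA1 : (0 : Fin 2) ∈ myI.A 1 ⟨j, by omega⟩ := by
    rw [myIA]; exact (mem0 1 _).mpr (Or.inr rfl)
  have hA2 : (0 : Fin 2) ∉ myI.A 2 ⟨j, by omega⟩ := by
    rw [myIA, mem0]
    rintro (h | h) <;> exact absurd h (by decide)
  refine ⟨hd, ?_, ?_, ?_⟩
  · have e0 := hupdA 0 (by rw [hd]; exact hA0)
    rw [e0, hb0, hρ14, max_eq_right (by linarith)]; ring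
  · have e1 := hupdA 1 (by rw [hd]; exact hA1)
    rw [e1, hb1, hρ14, max_eq_right (by linarith)]; ring
  · have e2 := hupdN 2 (by rw [hd]; exact hA2)
    rw [e2, hb2]

lemma budgets (t : ℕ) (b : ℕ → Fin 3 → ℝ) (d : Fin 6 → Fin 2)
    (hE : myI.MESExec t b d) :
    ∀ j : ℕ, j ≤ t → j ≤ 4 →
      b j 0 = 1 - (j : ℝ) / 4 ∧ b j 1 = 1 - (j : ℝ) / 4 ∧ b j 2 = 1 := by
  intro j
  induction j with
  | zero => intro _ _; refine ⟨?_, ?_, ?_⟩ <;> rw [hE.2.1] <;> norm_num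
  | succ k ih =>
    intro h1 h2
    obtain ⟨c0, c1, c2⟩ := ih (by omega) (by omega)
    have := (step t b d hE k (by omega) (by omega) c0 c1 c2).2
    push_cast
    exact this

lemma decided (t : ℕ) (b : ℕ → Fin 3 → ℝ) (d : Fin 6 → Fin 2)
    (hE : myI.MESExec t b d) (j : ℕ) (hj : j < 4) (hjt : j < t) (hj6 : j < 6) :
    d ⟨j, hj6⟩ = 0 := by
  obtain ⟨c0, c1, c2⟩ := budgets t b d hE j (by omega) (by omega)
  exact (step t b d hE j hj hjt c0 c1 c2).1

end MESCounterexample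

/-- there is a decision instance with `n = 3` voters and `T = 6` rounds such
that every MES-consistent decision sequence fails JR. -/
theorem mes_fails_JR :
    ∃ (γ : Type) (I : Inst 3 6 γ),
      ∀ d : Fin 6 → γ, I.MESConsistent d → ¬ I.JR d := by
  refine ⟨Fin 2, myI, ?_⟩
  rintro d ⟨hval, t, b, hE⟩ hJR
  have ht6 : t ≤ 6 := hE.1
  have hbnn := hE.2.2.1
  -- t ≥ 4: otherwise alternative 0 would still be affordable at termination
  have ht4 : 4 ≤ t := by
    by_contra h
    push_neg at h
    have hlt6 : t < 6 := by omega
    obtain ⟨c0, c1, c2⟩ := budgets t b d hE t le_rfl (by omega)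
    have h0C : (0 : Fin 2) ∈ myI.C ⟨t, hlt6⟩ := by
      rw [myIC]; unfold myC; split
      · exact Finset.mem_insert_self 0 _
      · exact Finset.mem_singleton_self 0
    have hterm := hE.2.2.2.2 hlt6 0 h0C (1 / 2) (by norm_num)
    apply hterm
    rw [aff0_iff, c0, c1]
    have ht3 : (t : ℝ) ≤ 3 := by exact_mod_cast Nat.lt_succ_iff.mp h
    have hm : (1 : ℝ) / 4 ≤ min (1 - (t : ℝ) / 4) (1 / 2) := le_min (by linarith) (by norm_num)
    linarith
  -- t ≤ 4: in round 4 nothing is affordable since voters 0,1 are broke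
  have ht4' : t ≤ 4 := by
    by_contra h
    push_neg at h
    obtain ⟨c0, c1, c2⟩ := budgets t b d hE 4 (by omega) le_rfl
    obtain ⟨hdC, ρ, hρ0, haff, _⟩ := hE.2.2.2.1 ⟨4, by norm_num⟩ h
    have hd4 : d ⟨4, by norm_num⟩ = 0 := by
      rw [myIC] at hdC; unfold myC at hdC
      rw [if_neg (by norm_num)] at hdC
      exact Finset.mem_singleton.mp hdC
    rw [hd4] at haff
    rw [aff0_iff, c0, c1] at haff
    norm_num at haff
    rw [min_eq_left hρ0] at haff
    linarith
  -- every decision is 0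
  have hd_all : ∀ j : Fin 6, d j = 0 := by
    intro j
    by_cases hj : (j : ℕ) < 4
    · exact decided t b d hE j hj (by omega) j.isLt
    · have hv := hval j
      rw [myIC] at hv; unfold myC at hv
      rw [if_neg (by omega)] at hv
      exact Finset.mem_singleton.mp hv
  -- voter 2 never approves the decision
  have hu0 : myI.util d 2 = 0 := by
    have hie : IsEmpty {j : Fin 6 // d j ∈ myI.A 2 j} := by
      constructor
      rintro ⟨j, hj⟩
      rw [hd_all j, myIA, mem0] at hj
      rcases hj with h | h <;> exact absurd h (by decide)
    exact Nat.card_of_isEmpty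
  -- the singleton group {2} agrees in 3 rounds
  have hag : ∀ j : Fin 6, myI.agrees {2} j ↔ (j : ℕ) < 3 := by
    intro j
    constructor
    · rintro ⟨c, hc⟩
      have hc2 := hc 2 (Finset.mem_singleton_self 2)
      by_contra hj
      rw [myIA] at hc2
      unfold myA at hc2
      rw [if_neg (by decide), if_neg hj] at hc2
      exact absurd hc2 (Finset.notMem_empty c)
    · intro hj
      refine ⟨1, ?_⟩
      intro i hi
      rw [Finset.mem_singleton] at hi
      subst hi
      rw [myIA]
      unfold myA
      rw [if_neg (by decide), if_pos hj]
      exact Finset.mem_singleton_self 1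
  have hagc : myI.agreeCount {2} = 3 := by
    unfold Inst.agreeCount
    rw [Nat.card_congr (Equiv.subtypeEquivRight hag)]
    have e : {j : Fin 6 // (j : ℕ) < 3} ≃ Fin 3 :=
      ⟨fun x => ⟨x.1, x.2⟩, fun y => ⟨⟨y.1, y.2.trans (by norm_num)⟩, y.2⟩,
        fun x => rfl, fun y => rfl⟩
    rw [Nat.card_congr e, Nat.card_eq_fintype_card, Fintype.card_fin]
  -- contradiction with JR for k = 3, S = {2}
  obtain ⟨i, hi, hu⟩ := hJR 3 (by norm_num) (by norm_num) {2} ⟨2, Finset.mem_singleton_self 2⟩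
    (by rw [hagc]) (by simp)
  rw [Finset.mem_singleton] at hi
  subst hi
  omega
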